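/- In the grid-neutral optimal solution, any RAU k with interior power 0 < p_k* < p_max satisfies κ_L ≤ √(p_k*)/γ_k ≤ κ_G, where κ_G = (∑_i √(p_i*) γ_i)/(μη) and κ_L = η² κ_G. Consequently, a grid-passive RAU (C_k = D_k = 0, hence p_k* = E_k) satisfies γ_k² κ_L² ≤ E_k ≤ γ_k² κ_G². -/

import Mathlib

open Finset Filter Topology

lemma stmt9_sqrt_diff_lb {x d : ℝ} (hx : 0 ≤ x) (hd : 0 < d) :
    d / (2 * Real.sqrt (x + d)) ≤ Real.sqrt (x + d) - Real.sqrt x := by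
  have h1 : Real.sqrt x ≤ Real.sqrt (x + d) := Real.sqrt_le_sqrt (by linarith)
  have h2 : Real.sqrt (x + d) ^ 2 = x + d := Real.sq_sqrt (by linarith)
  have h3 : Real.sqrt x ^ 2 = x := Real.sq_sqrt hx
  have h4 : 0 < Real.sqrt (x + d) := Real.sqrt_pos.mpr (by linarith)
  rw [div_le_iff₀ (by positivity)]
  nlinarith [sq_nonneg (Real.sqrt (x + d) - Real.sqrt x)]

lemma stmt9_sqrt_diff_ub {x e : ℝ} (he : 0 < e) (hx : e < x) :
    Real.sqrt x - Real.sqrt (x - e) ≤ e / (2 * Real.sqrt (x - e)) := by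
  have h1 : Real.sqrt (x - e) ≤ Real.sqrt x := Real.sqrt_le_sqrt (by linarith)
  have h2 : Real.sqrt (x - e) ^ 2 = x - e := Real.sq_sqrt (by linarith)
  have h3 : Real.sqrt x ^ 2 = x := Real.sq_sqrt (by linarith)
  have h4 : 0 < Real.sqrt (x - e) := Real.sqrt_pos.mpr (by linarith)
  rw [le_div_iff₀ (by positivity)]
  nlinarith [sq_nonneg (Real.sqrt x - Real.sqrt (x - e))]

set_option maxHeartbeats 1000000 in
/-- Key perturbation lemma: for two distinct interior RAUs `j, k`,
optimality forces `η² γₖ √pⱼ ≤ γⱼ √pₖ`. -/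
lemma stmt9_key (N : ℕ) (γ E : Fin N → ℝ) (pmax η : ℝ)
    (hγ : ∀ i, 0 < γ i) (hη1 : 0 < η) (hη2 : η < 1)
    (p : Fin N → ℝ)
    (hfeas : (∀ i, 0 ≤ p i ∧ p i ≤ pmax) ∧
      ∑ i, (η * max (E i - p i) 0 - max (p i - E i) 0 / η) = 0)
    (hopt : ∀ q : Fin N → ℝ,
      (∀ i, 0 ≤ q i ∧ q i ≤ pmax) →
      ∑ i, (η * max (E i - q i) 0 - max (q i - E i) 0 / η) = 0 →
      (∑ i, Real.sqrt (q i) * γ i) ^ 2 ≤ (∑ i, Real.sqrt (p i) * γ i) ^ 2)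
    (j k : Fin N) (hjk : j ≠ k)
    (hj1 : 0 < p j) (hj2 : p j < pmax) (hk1 : 0 < p k) (hk2 : p k < pmax) :
    η ^ 2 * (γ k * Real.sqrt (p j)) ≤ γ j * Real.sqrt (p k) := by
  have hη0 : (0:ℝ) < η ^ 2 := by positivity
  have hηinv : η ≤ 1/η := by
    rw [le_div_iff₀ hη1]; nlinarith
  set cj : ℝ := if p j ≤ E j then η else 1/η with hcj_def
  set ck : ℝ := if E k ≤ p k then η else 1/η with hck_def
  have hcj_pos : 0 < cj := by rw [hcj_def]; split_ifs <;> positivity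
  have hck_pos : 0 < ck := by rw [hck_def]; split_ifs <;> positivity
  have hcj_bd : η ≤ cj ∧ cj ≤ 1/η := by
    rw [hcj_def]; split_ifs
    exacts [⟨le_refl _, hηinv⟩, ⟨hηinv, le_refl _⟩]
  have hck_bd : η ≤ ck ∧ ck ≤ 1/η := by
    rw [hck_def]; split_ifs
    exacts [⟨le_refl _, hηinv⟩, ⟨hηinv, le_refl _⟩]
  set c : ℝ := ck * cj with hc_def
  have hc_pos : 0 < c := mul_pos hck_pos hcj_pos
  have hc_lb : η ^ 2 ≤ c := by
    have h := mul_le_mul hck_bd.1 hcj_bd.1 hη1.le hck_pos.le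
    calc η ^ 2 = η * η := by ring
    _ ≤ ck * cj := h
  have hc_ub : c ≤ 1 / η ^ 2 := by
    have h := mul_le_mul hck_bd.2 hcj_bd.2 hcj_pos.le (by positivity : (0:ℝ) ≤ 1/η)
    calc c = ck * cj := hc_def
    _ ≤ (1/η) * (1/η) := h
    _ = 1 / η ^ 2 := by ring
  set ε₀ : ℝ := min (min (p j) ((pmax - p k)/c))
      (min (if E j < p j then p j - E j else 1) (if p k < E k then (E k - p k)/c else 1))
      with hε₀_def
  have hε₀ : 0 < ε₀ := by
    rw [hε₀_def]
    apply lt_min (lt_min hj1 (div_pos (by linarith) hc_pos))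
    apply lt_min <;> split_ifs with h
    · linarith
    · norm_num
    · exact div_pos (by linarith) hc_pos
    · norm_num
  -- the step inequality for each small ε
  have step : ∀ ε ∈ Set.Ioo (0:ℝ) ε₀,
      η^2 * γ k / (2 * Real.sqrt (p k + ε / η^2)) ≤ γ j / (2 * Real.sqrt (p j - ε)) := by
    rintro ε ⟨hε, hεu⟩
    have hε1 : ε < p j := lt_of_lt_of_le hεu (le_trans (min_le_left _ _) (min_le_left _ _))
    have hε2 : ε < (pmax - p k)/c :=
      lt_of_lt_of_le hεu (le_trans (min_le_left _ _) (min_le_right _ _))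
    have hε3 : ε < (if E j < p j then p j - E j else 1) :=
      lt_of_lt_of_le hεu (le_trans (min_le_right _ _) (min_le_left _ _))
    have hε4 : ε < (if p k < E k then (E k - p k)/c else 1) :=
      lt_of_lt_of_le hεu (le_trans (min_le_right _ _) (min_le_right _ _))
    set δ : ℝ := c * ε with hδ_def
    have hδ_pos : 0 < δ := mul_pos hc_pos hε
    have hδ_ub : p k + δ ≤ pmax := by
      rw [lt_div_iff₀ hc_pos] at hε2
      rw [hδ_def]; linarith
    have hδ2 : δ ≤ ε / η^2 := by
      calc δ = c * ε := hδ_def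
      _ ≤ (1/η^2) * ε := mul_le_mul_of_nonneg_right hc_ub hε.le
      _ = ε / η^2 := by ring
    have hδ1 : η^2 * ε ≤ δ := by
      rw [hδ_def]; exact mul_le_mul_of_nonneg_right hc_lb hε.le
    set q : Fin N → ℝ := Function.update (Function.update p j (p j - ε)) k (p k + δ)
      with hq_def
    have hqk : q k = p k + δ := by rw [hq_def]; simp
    have hqj : q j = p j - ε := by
      rw [hq_def, Function.update_of_ne hjk, Function.update_self]
    have hqo : ∀ i, i ≠ j → i ≠ k → q i = p i := by
      intro i hij hik
      rw [hq_def, Function.update_of_ne hik, Function.update_of_ne hij]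
    -- generic support computation
    have hsupp : ∀ F : Fin N → ℝ → ℝ, ∑ i, F i (q i) =
        ∑ i, F i (p i) + ((F j (q j) - F j (p j)) + (F k (q k) - F k (p k))) := by
      intro F
      have h1 : ∑ i ∈ ({j, k} : Finset (Fin N)), (F i (q i) - F i (p i))
          = ∑ i, (F i (q i) - F i (p i)) := by
        apply Finset.sum_subset (Finset.subset_univ _)
        intro i _ hi
        simp only [Finset.mem_insert, Finset.mem_singleton, not_or] at hi
        rw [hqo i hi.1 hi.2]; ring
      rw [Finset.sum_pair hjk] at h1
      have h2 : ∑ i, (F i (q i) - F i (p i)) = ∑ i, F i (q i) - ∑ i, F i (p i) :=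
        Finset.sum_sub_distrib _ _
      rw [h2] at h1
      linarith
    -- feasibility of q
    have hqfeas : ∀ i, 0 ≤ q i ∧ q i ≤ pmax := by
      intro i
      rcases eq_or_ne i j with rfl | hij
      · rw [hqj]
        exact ⟨by linarith, by linarith [(hfeas.1 i).2]⟩
      rcases eq_or_ne i k with rfl | hik
      · rw [hqk]
        exact ⟨by linarith, by linarith⟩
      · rw [hqo i hij hik]; exact hfeas.1 i
    -- the two local changes in the constraint function
    have hΔj : (η * max (E j - q j) 0 - max (q j - E j) 0 / η)
        - (η * max (E j - p j) 0 - max (p j - E j) 0 / η) = cj * ε := by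
      rw [hqj, hcj_def]
      rcases le_or_gt (p j) (E j) with h | h
      · have m1 : max (E j - (p j - ε)) 0 = E j - (p j - ε) := max_eq_left (by linarith)
        have m2 : max ((p j - ε) - E j) 0 = 0 := max_eq_right (by linarith)
        have m3 : max (E j - p j) 0 = E j - p j := max_eq_left (by linarith)
        have m4 : max (p j - E j) 0 = 0 := max_eq_right (by linarith)
        rw [m1, m2, m3, m4, if_pos h]
        ring
      · rw [if_pos h] at hε3
        have m1 : max (E j - (p j - ε)) 0 = 0 := max_eq_right (by linarith)
        have m2 : max ((p j - ε) - E j) 0 = (p j - ε) - E j := max_eq_left (by linarith)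
        have m3 : max (E j - p j) 0 = 0 := max_eq_right (by linarith)
        have m4 : max (p j - E j) 0 = p j - E j := max_eq_left (by linarith)
        rw [m1, m2, m3, m4, if_neg (not_le.mpr h)]
        field_simp
        ring
    have hΔk : (η * max (E k - q k) 0 - max (q k - E k) 0 / η)
        - (η * max (E k - p k) 0 - max (p k - E k) 0 / η) = -(cj * ε) := by
      rw [hqk]
      rcases le_or_gt (E k) (p k) with h | h
      · have hckval : ck = η := by rw [hck_def, if_pos h]
        have hδval : δ = η * (cj * ε) := by rw [hδ_def, hc_def, hckval]; ring
        have m1 : max (E k - (p k + δ)) 0 = 0 := max_eq_right (by linarith)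
        have m2 : max ((p k + δ) - E k) 0 = (p k + δ) - E k := max_eq_left (by linarith)
        have m3 : max (E k - p k) 0 = 0 := max_eq_right (by linarith)
        have m4 : max (p k - E k) 0 = p k - E k := max_eq_left (by linarith)
        rw [m1, m2, m3, m4, hδval]
        field_simp
        ring
      · rw [if_pos h] at hε4
        rw [lt_div_iff₀ hc_pos] at hε4
        have hδlt : δ < E k - p k := by rw [hδ_def]; linarith
        have hckval : ck = 1/η := by rw [hck_def, if_neg (not_le.mpr h)]
        have hδval : δ = (cj * ε) / η := by
          rw [hδ_def, hc_def, hckval]; ring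
        have m1 : max (E k - (p k + δ)) 0 = E k - (p k + δ) := max_eq_left (by linarith)
        have m2 : max ((p k + δ) - E k) 0 = 0 := max_eq_right (by linarith)
        have m3 : max (E k - p k) 0 = E k - p k := max_eq_left (by linarith)
        have m4 : max (p k - E k) 0 = 0 := max_eq_right (by linarith)
        rw [m1, m2, m3, m4, hδval]
        field_simp
        ring
    -- constraint holds for q
    have hconstr : ∑ i, (η * max (E i - q i) 0 - max (q i - E i) 0 / η) = 0 := by
      have h := hsupp (fun i t => η * max (E i - t) 0 - max (t - E i) 0 / η)
      rw [h, hfeas.2]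
      linarith [hΔj, hΔk]
    -- apply optimality
    have hSq_nonneg : 0 ≤ ∑ i, Real.sqrt (q i) * γ i :=
      Finset.sum_nonneg fun i _ => mul_nonneg (Real.sqrt_nonneg _) (hγ i).le
    have hSp_nonneg : 0 ≤ ∑ i, Real.sqrt (p i) * γ i :=
      Finset.sum_nonneg fun i _ => mul_nonneg (Real.sqrt_nonneg _) (hγ i).le
    have hsq := hopt q hqfeas hconstr
    have hSle : ∑ i, Real.sqrt (q i) * γ i ≤ ∑ i, Real.sqrt (p i) * γ i := by
      have h1 := Real.sqrt_le_sqrt hsq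
      rwa [Real.sqrt_sq hSq_nonneg, Real.sqrt_sq hSp_nonneg] at h1
    have hobj := hsupp (fun i t => Real.sqrt t * γ i)
    rw [hqj, hqk] at hobj
    have h3 : Real.sqrt (p k + δ) * γ k - Real.sqrt (p k) * γ k
        ≤ Real.sqrt (p j) * γ j - Real.sqrt (p j - ε) * γ j := by linarith
    -- sqrt estimates
    set u : ℝ := Real.sqrt (p k + δ) with hu_def
    set v : ℝ := Real.sqrt (p k) with hv_def
    set a : ℝ := Real.sqrt (p j) with ha_def
    set b : ℝ := Real.sqrt (p j - ε) with hb_def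
    set w : ℝ := Real.sqrt (p k + ε/η^2) with hw_def
    have hu2 : u^2 = p k + δ := Real.sq_sqrt (by linarith)
    have hv2 : v^2 = p k := Real.sq_sqrt hk1.le
    have ha2 : a^2 = p j := Real.sq_sqrt hj1.le
    have hb2 : b^2 = p j - ε := Real.sq_sqrt (by linarith)
    have hw2 : w^2 = p k + ε/η^2 := Real.sq_sqrt (by positivity)
    have hu_pos : 0 < u := Real.sqrt_pos.mpr (by linarith)
    have hb_pos : 0 < b := Real.sqrt_pos.mpr (by linarith)
    have hw_pos : 0 < w := Real.sqrt_pos.mpr (by positivity)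
    have hv_nonneg : 0 ≤ v := Real.sqrt_nonneg _
    have ha_nonneg : 0 ≤ a := Real.sqrt_nonneg _
    have hvu : v ≤ u := Real.sqrt_le_sqrt (by linarith)
    have hba : b ≤ a := Real.sqrt_le_sqrt (by linarith)
    have huw : u ≤ w := Real.sqrt_le_sqrt (by linarith)
    have hb1 : δ/(2*u) ≤ u - v :=
      stmt9_sqrt_diff_lb hk1.le hδ_pos
    have hb2' : a - b ≤ ε/(2*b) := by
      have := stmt9_sqrt_diff_ub hε hε1
      rwa [ha_def, hb_def]
    have h4 : γ k * (δ/(2*u)) ≤ γ k * (u - v) :=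
      mul_le_mul_of_nonneg_left hb1 (hγ k).le
    have h5 : γ j * (a - b) ≤ γ j * (ε/(2*b)) :=
      mul_le_mul_of_nonneg_left hb2' (hγ j).le
    have h6 : γ k * (δ/(2*u)) ≤ γ j * (ε/(2*b)) := by linarith
    have h7 : η^2*ε/(2*w) ≤ δ/(2*u) :=
      div_le_div₀ hδ_pos.le hδ1 (by positivity) (by linarith)
    have h8 : γ k * (η^2*ε/(2*w)) ≤ γ j * (ε/(2*b)) :=
      le_trans (mul_le_mul_of_nonneg_left h7 (hγ k).le) h6
    have h9 : (η^2 * γ k/(2*w)) * ε ≤ (γ j/(2*b)) * ε := by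
      calc (η^2 * γ k/(2*w)) * ε = γ k * (η^2*ε/(2*w)) := by ring
      _ ≤ γ j * (ε/(2*b)) := h8
      _ = (γ j/(2*b)) * ε := by ring
    exact le_of_mul_le_mul_right h9 hε
  -- limit as ε → 0⁺
  have hA : Tendsto (fun ε : ℝ => η^2 * γ k / (2 * Real.sqrt (p k + ε / η^2)))
      (𝓝[>] (0:ℝ)) (𝓝 (η^2 * γ k / (2 * Real.sqrt (p k)))) := by
    have hcont : ContinuousAt (fun ε : ℝ => η^2 * γ k / (2 * Real.sqrt (p k + ε / η^2))) 0 := by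
      apply ContinuousAt.div continuousAt_const
      · exact (continuous_const.mul (Real.continuous_sqrt.comp
          (continuous_const.add (continuous_id.div_const _)))).continuousAt
      · have h : (0:ℝ) < 2 * Real.sqrt (p k + 0 / η^2) := by
          rw [zero_div, add_zero]
          have := Real.sqrt_pos.mpr hk1
          linarith
        exact h.ne'
    have h : Tendsto (fun ε : ℝ => η^2 * γ k / (2 * Real.sqrt (p k + ε / η^2)))
        (𝓝[>] (0:ℝ)) (𝓝 (η^2 * γ k / (2 * Real.sqrt (p k + 0 / η^2)))) :=
      (hcont.tendsto).mono_left nhdsWithin_le_nhds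
    simpa using h
  have hB : Tendsto (fun ε : ℝ => γ j / (2 * Real.sqrt (p j - ε)))
      (𝓝[>] (0:ℝ)) (𝓝 (γ j / (2 * Real.sqrt (p j)))) := by
    have hcont : ContinuousAt (fun ε : ℝ => γ j / (2 * Real.sqrt (p j - ε))) 0 := by
      apply ContinuousAt.div continuousAt_const
      · exact (continuous_const.mul (Real.continuous_sqrt.comp
          (continuous_const.sub continuous_id))).continuousAt
      · have h : (0:ℝ) < 2 * Real.sqrt (p j - 0) := by
          rw [sub_zero]
          have := Real.sqrt_pos.mpr hj1
          linarith
        exact h.ne'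
    have h : Tendsto (fun ε : ℝ => γ j / (2 * Real.sqrt (p j - ε)))
        (𝓝[>] (0:ℝ)) (𝓝 (γ j / (2 * Real.sqrt (p j - 0)))) :=
      (hcont.tendsto).mono_left nhdsWithin_le_nhds
    simpa using h
  have hev : (fun ε : ℝ => η^2 * γ k / (2 * Real.sqrt (p k + ε / η^2)))
      ≤ᶠ[𝓝[>] (0:ℝ)] (fun ε : ℝ => γ j / (2 * Real.sqrt (p j - ε))) := by
    filter_upwards [Ioo_mem_nhdsGT_of_mem (Set.mem_Ico.mpr ⟨le_refl (0:ℝ), hε₀⟩)] with ε hε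
    exact step ε hε
  have hfin := le_of_tendsto_of_tendsto hA hB hev
  have hvj : 0 < Real.sqrt (p j) := Real.sqrt_pos.mpr hj1
  have hvk : 0 < Real.sqrt (p k) := Real.sqrt_pos.mpr hk1
  rw [div_le_div_iff₀ (by positivity) (by positivity)] at hfin
  linarith

set_option maxHeartbeats 1000000 in
/-- Grid-neutral case: every interior-power RAU satisfies `κ_L ≤ √p*ₖ/γₖ ≤ κ_G`,
and a grid-passive RAU (`p*ₖ = Eₖ`) satisfies `γₖ²κ_L² ≤ Eₖ ≤ γₖ²κ_G²`. -/
theorem stmt_9 (N : ℕ) (γ E : Fin N → ℝ) (pmax η : ℝ)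
    (hγ : ∀ i, 0 < γ i) (hE : ∀ i, 0 < E i) (hpmax : 0 < pmax)
    (hη1 : 0 < η) (hη2 : η < 1)
    (p : Fin N → ℝ)
    (hfeas : (∀ i, 0 ≤ p i ∧ p i ≤ pmax) ∧
      ∑ i, (η * max (E i - p i) 0 - max (p i - E i) 0 / η) = 0)
    (hopt : ∀ q : Fin N → ℝ,
      (∀ i, 0 ≤ q i ∧ q i ≤ pmax) →
      ∑ i, (η * max (E i - q i) 0 - max (q i - E i) 0 / η) = 0 →
      (∑ i, Real.sqrt (q i) * γ i) ^ 2 ≤ (∑ i, Real.sqrt (p i) * γ i) ^ 2) :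
    ∃ μ : ℝ, 0 < μ ∧
      (let κG := (∑ i, Real.sqrt (p i) * γ i) / (μ * η);
       let κL := η ^ 2 * κG;
       (∀ k, 0 < p k → p k < pmax →
          κL ≤ Real.sqrt (p k) / γ k ∧ Real.sqrt (p k) / γ k ≤ κG) ∧
       (∀ k, 0 < p k → p k < pmax → p k = E k →
          γ k ^ 2 * κL ^ 2 ≤ E k ∧ E k ≤ γ k ^ 2 * κG ^ 2)) := by
  by_cases hex : ∃ k, 0 < p k ∧ p k < pmax
  · obtain ⟨k₀, hk₀1, hk₀2⟩ := hex
    set S : ℝ := ∑ i, Real.sqrt (p i) * γ i with hS_def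
    have hS : 0 < S := by
      apply Finset.sum_pos' (fun i _ => mul_nonneg (Real.sqrt_nonneg _) (hγ i).le)
      exact ⟨k₀, Finset.mem_univ _,
        mul_pos (Real.sqrt_pos.mpr hk₀1) (hγ k₀)⟩
    set I : Finset (Fin N) := Finset.univ.filter (fun i => 0 < p i ∧ p i < pmax)
      with hI_def
    have hmem : ∀ i, 0 < p i → p i < pmax → i ∈ I := fun i h1 h2 =>
      Finset.mem_filter.mpr ⟨Finset.mem_univ _, h1, h2⟩
    have hIne : I.Nonempty := ⟨k₀, hmem k₀ hk₀1 hk₀2⟩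
    set M : ℝ := I.sup' hIne (fun i => γ i / Real.sqrt (p i)) with hM_def
    have hM_pos : 0 < M := by
      have h1 : γ k₀ / Real.sqrt (p k₀) ≤ M :=
        Finset.le_sup' (fun i => γ i / Real.sqrt (p i)) (hmem k₀ hk₀1 hk₀2)
      have h2 : 0 < γ k₀ / Real.sqrt (p k₀) :=
        div_pos (hγ k₀) (Real.sqrt_pos.mpr hk₀1)
      linarith
    have hMge : ∀ k, 0 < p k → p k < pmax → γ k / Real.sqrt (p k) ≤ M := by
      intro k h1 h2
      exact Finset.le_sup' (fun i => γ i / Real.sqrt (p i)) (hmem k h1 h2)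
    have hkey : ∀ k, 0 < p k → p k < pmax → η^2 * M ≤ γ k / Real.sqrt (p k) := by
      intro k hpk1 hpk2
      have hsk : 0 < Real.sqrt (p k) := Real.sqrt_pos.mpr hpk1
      have h2 : M ≤ γ k / Real.sqrt (p k) / η ^ 2 := by
        apply Finset.sup'_le
        intro i hi
        rw [hI_def, Finset.mem_filter] at hi
        obtain ⟨-, hpi1, hpi2⟩ := hi
        have hsi : 0 < Real.sqrt (p i) := Real.sqrt_pos.mpr hpi1
        rw [div_div, div_le_div_iff₀ hsi (by positivity)]
        rcases eq_or_ne i k with rfl | hne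
        · have hη2' : η^2 < 1 := by nlinarith
          nlinarith [mul_pos (hγ i) hsi]
        · have := stmt9_key N γ E pmax η hγ hη1 hη2 p hfeas hopt k i hne.symm
            hpk1 hpk2 hpi1 hpi2
          nlinarith
      have h3 : η^2 * M ≤ η^2 * (γ k / Real.sqrt (p k) / η ^ 2) :=
        mul_le_mul_of_nonneg_left h2 (by positivity)
      have h4 : η^2 * (γ k / Real.sqrt (p k) / η ^ 2) = γ k / Real.sqrt (p k) := by
        field_simp
      linarith
    refine ⟨η * S * M, by positivity, ?_⟩
    dsimp only
    have hκG : S / (η * S * M * η) = 1 / (η^2 * M) := by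
      field_simp
    have bullet1 : ∀ k, 0 < p k → p k < pmax →
        η ^ 2 * (S / (η * S * M * η)) ≤ Real.sqrt (p k) / γ k ∧
        Real.sqrt (p k) / γ k ≤ S / (η * S * M * η) := by
      intro k hpk1 hpk2
      have hsk : 0 < Real.sqrt (p k) := Real.sqrt_pos.mpr hpk1
      have hMk := hMge k hpk1 hpk2
      rw [div_le_iff₀ hsk] at hMk
      have hkeyk := hkey k hpk1 hpk2
      rw [le_div_iff₀ hsk] at hkeyk
      constructor
      · rw [hκG]
        have h5 : η ^ 2 * (1 / (η^2 * M)) = 1 / M := by field_simp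
        rw [h5, div_le_div_iff₀ hM_pos (hγ k)]
        nlinarith
      · rw [hκG, div_le_div_iff₀ (hγ k) (by positivity)]
        nlinarith
    refine ⟨bullet1, ?_⟩
    intro k hpk1 hpk2 hpE
    obtain ⟨hl, hr⟩ := bullet1 k hpk1 hpk2
    have hsq : Real.sqrt (p k) ^ 2 = p k := Real.sq_sqrt hpk1.le
    have hκL_pos : 0 < η ^ 2 * (S / (η * S * M * η)) := by positivity
    have hsk : 0 < Real.sqrt (p k) := Real.sqrt_pos.mpr hpk1
    rw [le_div_iff₀ (hγ k)] at hl
    rw [div_le_iff₀ (hγ k)] at hr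
    constructor
    · rw [← hpE]
      have hprod := mul_le_mul hl hl (mul_nonneg hκL_pos.le (hγ k).le) hsk.le
      nlinarith [hprod, hsq]
    · rw [← hpE]
      have hκG_pos : 0 < S / (η * S * M * η) := by positivity
      have hprod := mul_le_mul hr hr hsk.le (mul_nonneg hκG_pos.le (hγ k).le)
      nlinarith [hprod, hsq]
  · refine ⟨1, one_pos, ?_⟩
    dsimp only
    constructor
    · intro k h1 h2
      exact absurd ⟨k, h1, h2⟩ hex
    · intro k h1 h2 _
      exact absurd ⟨k, h1, h2⟩ hex
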